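/- The number of admissible sequences of length m-1 equals the Catalan number C_m = (1/(m+1)) * binomial(2m, m). -/

import Mathlib

open List DyckStep Finset

namespace AdmissibleCatalan

lemma countD_take (l : List DyckStep) : ∀ t, t ≤ l.length →
    (l.take t).count D = ∑ j ∈ Finset.range t, if l.getD j U = D then 1 else 0 := by
  intro t
  induction t with
  | zero => simp
  | succ t ih =>
    intro ht
    have ht' : t < l.length := ht
    rw [Finset.sum_range_succ, ← ih ht'.le, List.take_succ]
    rw [List.count_append]
    congr 1
    rw [List.getD_eq_getElem _ _ ht']
    rw [List.getElem?_eq_getElem ht']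
    simp [List.count_singleton']

lemma countU_add_countD (l : List DyckStep) : l.count U + l.count D = l.length := by
  induction l with
  | nil => simp
  | cons x l ih => cases x <;> simp [List.count_cons, ← ih] <;> omega

variable {n : ℕ}

/-- the predicate for a `D` at position `j` of the word associated to `a`. -/
def P (n : ℕ) (a : Fin n → ℕ) (j : ℕ) : Prop := j = 2*n+1 ∨ ∃ i, a i = j

instance (a : Fin n → ℕ) (j : ℕ) : Decidable (P n a j) := by unfold P; infer_instance

/-- the word associated to an admissible sequence. -/
def word (n : ℕ) (a : Fin n → ℕ) : List DyckStep :=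
  List.ofFn (fun j : Fin (2*n+2) => if P n a (j : ℕ) then D else U)

@[simp] lemma word_length (a : Fin n → ℕ) : (word n a).length = 2*n+2 := by
  simp [word]

lemma word_getD (a : Fin n → ℕ) {j : ℕ} (hj : j < 2*n+2) :
    (word n a).getD j U = if P n a j then D else U := by
  rw [word, List.getD_eq_getElem _ _ (by simp; omega), List.getElem_ofFn]

lemma card_filter_P (a : Fin n → ℕ) (ha : StrictMono a) (hb : ∀ i, a i ≤ 2*n) (t : ℕ) :
    ((Finset.range t).filter (fun j => P n a j)).card
      = (if 2*n+1 < t then 1 else 0)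
        + (Finset.univ.filter (fun i : Fin n => a i < t)).card := by
  classical
  have hsplit : (Finset.range t).filter (fun j => P n a j)
      = ((Finset.range t).filter (fun j => j = 2*n+1))
        ∪ ((Finset.range t).filter (fun j => ∃ i, a i = j)) := by
    ext j
    rw [Finset.mem_filter]
    simp only [Finset.mem_filter, Finset.mem_union, Finset.mem_range, P]
    tauto
  have hdisj : Disjoint ((Finset.range t).filter (fun j => j = 2*n+1))
      ((Finset.range t).filter (fun j => ∃ i, a i = j)) := by
    rw [Finset.disjoint_left]
    rintro j hj1 hj2
    simp only [Finset.mem_filter] at hj1 hj2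
    obtain ⟨i, hi⟩ := hj2.2
    have := hb i
    omega
  have h1 : ((Finset.range t).filter (fun j => j = 2*n+1)).card
      = if 2*n+1 < t then 1 else 0 := by
    by_cases h : 2*n+1 < t
    · rw [Finset.filter_eq', if_pos (Finset.mem_range.mpr h), if_pos h]
      simp
    · rw [Finset.filter_eq', if_neg (fun hc => h (Finset.mem_range.mp hc)), if_neg h]
      simp
  have h2 : ((Finset.range t).filter (fun j => ∃ i, a i = j))
      = Finset.image a (Finset.univ.filter (fun i : Fin n => a i < t)) := by
    ext j
    simp only [Finset.mem_filter, Finset.mem_range, Finset.mem_image, Finset.mem_univ,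
      true_and]
    constructor
    · rintro ⟨hjt, i, rfl⟩; exact ⟨i, hjt, rfl⟩
    · rintro ⟨i, hit, rfl⟩; exact ⟨hit, i, rfl⟩
  rw [hsplit, Finset.card_union_of_disjoint hdisj, h1, h2,
    Finset.card_image_of_injective _ ha.injective]

/-- the number of indices with `a i < t` is at most `t / 2`. -/
lemma card_lt_le (a : Fin n → ℕ) (hlb : ∀ i : Fin n, 2*(i:ℕ)+1 ≤ a i) (t : ℕ) :
    (Finset.univ.filter (fun i : Fin n => a i < t)).card ≤ t / 2 := by
  classical
  calc (Finset.univ.filter (fun i : Fin n => a i < t)).card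
      ≤ (Finset.range (t/2)).card := by
        refine Finset.card_le_card_of_injOn (fun i => (i : ℕ)) ?_ ?_
        · intro i hi
          rw [Finset.mem_coe, Finset.mem_filter] at hi
          have := hlb i
          simp only [Finset.mem_coe, Finset.mem_range]
          omega
        · intro i _ j _ h
          exact Fin.ext h
    _ = t / 2 := by simp

lemma countD_word_take (a : Fin n → ℕ) (ha : StrictMono a) (hb : ∀ i, a i ≤ 2*n)
    {t : ℕ} (ht : t ≤ 2*n+2) :
    ((word n a).take t).count D
      = (if 2*n+1 < t then 1 else 0)
        + (Finset.univ.filter (fun i : Fin n => a i < t)).card := by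
  classical
  rw [countD_take _ t (by simpa using ht)]
  rw [← card_filter_P a ha hb t, Finset.card_filter]
  apply Finset.sum_congr rfl
  intro j hj
  rw [word_getD a (lt_of_lt_of_le (Finset.mem_range.mp hj) ht)]
  split_ifs <;> simp_all

lemma countD_word (a : Fin n → ℕ) (ha : StrictMono a) (hb : ∀ i, a i ≤ 2*n) :
    (word n a).count D = n + 1 := by
  classical
  have := countD_word_take a ha hb (le_refl (2*n+2))
  rw [List.take_of_length_le (by simp)] at this
  rw [this]
  have hall : (Finset.univ.filter (fun i : Fin n => a i < 2*n+2)) = Finset.univ := by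
    ext i; simp only [Finset.mem_filter, Finset.mem_univ, true_and, iff_true]
    have := hb i; omega
  rw [hall, if_pos (by omega : 2*n+1 < 2*n+2), Finset.card_univ, Fintype.card_fin]
  omega

lemma countU_word (a : Fin n → ℕ) (ha : StrictMono a) (hb : ∀ i, a i ≤ 2*n) :
    (word n a).count U = n + 1 := by
  have h1 := countU_add_countD (word n a)
  rw [countD_word a ha hb, word_length] at h1
  omega

/-- the Dyck word associated to an admissible sequence. -/
def dyck (a : Fin n → ℕ) (ha : StrictMono a)
    (hab : ∀ i : Fin n, 2*(i:ℕ)+1 ≤ a i ∧ a i ≤ 2*n) : DyckWord where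
  toList := word n a
  count_U_eq_count_D := by
    rw [countD_word a ha (fun i => (hab i).2), countU_word a ha (fun i => (hab i).2)]
  count_D_le_count_U := by
    classical
    intro t
    rcases le_or_gt t (2*n+2) with ht | ht
    · have hD := countD_word_take a ha (fun i => (hab i).2) ht
      have hUD := countU_add_countD ((word n a).take t)
      have hlen : ((word n a).take t).length = t := by
        simp [List.length_take]; omega
      have hle : (Finset.univ.filter (fun i : Fin n => a i < t)).card ≤ t / 2 :=
        card_lt_le a (fun i => (hab i).1) t
      have hcard : (Finset.univ.filter (fun i : Fin n => a i < t)).card ≤ n := by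
        simpa using Finset.card_filter_le Finset.univ (fun i : Fin n => a i < t)
      rw [hlen] at hUD
      split_ifs at hD with h2 <;> omega
    · rw [List.take_of_length_le (by simp; omega)]
      rw [countD_word a ha (fun i => (hab i).2), countU_word a ha (fun i => (hab i).2)]

lemma dyck_semilength (a : Fin n → ℕ) (ha : StrictMono a)
    (hab : ∀ i : Fin n, 2*(i:ℕ)+1 ≤ a i ∧ a i ≤ 2*n) :
    (dyck a ha hab).semilength = n + 1 :=
  countU_word a ha (fun i => (hab i).2)


namespace Rev

lemma len (n : ℕ) (p : DyckWord) (hp : p.semilength = n + 1) :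
    p.toList.length = 2*n+2 := by
  have := p.two_mul_semilength_eq_length
  rw [hp] at this; omega

/-- the set of positions of `D`s in `p`. -/
def S (n : ℕ) (p : DyckWord) : Finset ℕ :=
  (Finset.range (2*n+2)).filter (fun j => p.toList.getD j U = D)

lemma countD_take_eq (n : ℕ) (p : DyckWord) (hp : p.semilength = n + 1)
    (t : ℕ) (ht : t ≤ 2*n+2) :
    (p.toList.take t).count D = ((S n p).filter (fun j => j < t)).card := by
  classical
  have hset : (S n p).filter (fun j => j < t)
      = (Finset.range t).filter (fun j => p.toList.getD j U = D) := by
    ext j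
    simp only [S, Finset.mem_filter, Finset.mem_range]
    constructor
    · rintro ⟨⟨h1, h2⟩, h3⟩; exact ⟨h3, h2⟩
    · rintro ⟨h1, h2⟩; exact ⟨⟨lt_of_lt_of_le h1 ht, h2⟩, h1⟩
  rw [hset, Finset.card_filter, countD_take _ t (by rw [len n p hp]; exact ht)]

lemma cardS (n : ℕ) (p : DyckWord) (hp : p.semilength = n + 1) :
    (S n p).card = n + 1 := by
  classical
  have h1 := countD_take_eq n p hp (2*n+2) le_rfl
  rw [List.take_of_length_le (le_of_eq (len n p hp))] at h1
  have h2 : (S n p).filter (fun j => j < 2*n+2) = S n p := by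
    apply Finset.filter_true_of_mem
    intro j hj
    exact Finset.mem_range.mp (Finset.mem_filter.mp hj).1
  rw [h2] at h1
  rw [← h1, ← DyckWord.semilength_eq_count_D, hp]

/-- the increasing enumeration of `D` positions. -/
noncomputable def d (n : ℕ) (p : DyckWord) (hp : p.semilength = n + 1) :
    Fin (n+1) ↪o ℕ := (S n p).orderEmbOfFin (cardS n p hp)

lemma d_mem (n : ℕ) (p : DyckWord) (hp : p.semilength = n + 1) (l : Fin (n+1)) :
    d n p hp l ∈ S n p := Finset.orderEmbOfFin_mem _ _ _

lemma d_lt (n : ℕ) (p : DyckWord) (hp : p.semilength = n + 1) (l : Fin (n+1)) :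
    d n p hp l < 2*n+2 :=
  Finset.mem_range.mp (Finset.mem_filter.mp (d_mem n p hp l)).1

lemma d_lb (n : ℕ) (p : DyckWord) (hp : p.semilength = n + 1) (l : Fin (n+1)) :
    2*(l:ℕ)+1 ≤ d n p hp l := by
  classical
  set v := d n p hp l with hv
  have hvlt : v < 2*n+2 := d_lt n p hp l
  have hcount : (p.toList.take (v+1)).count D
      = ((S n p).filter (fun j => j < v+1)).card :=
    countD_take_eq n p hp _ (by omega)
  have hge : (l:ℕ)+1 ≤ ((S n p).filter (fun j => j < v+1)).card := by
    calc (l:ℕ)+1 = (Finset.Iic l).card := (Fin.card_Iic l).symm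
    _ ≤ _ := by
        refine Finset.card_le_card_of_injOn (d n p hp) ?_ ?_
        · intro x hx
          rw [Finset.mem_coe, Finset.mem_filter]
          refine ⟨d_mem n p hp x, ?_⟩
          have : d n p hp x ≤ v := (d n p hp).monotone (Finset.mem_Iic.mp hx)
          omega
        · intro x _ y _ h
          exact (d n p hp).injective h
  have hpre := p.count_D_le_count_U (v+1)
  have hUD := countU_add_countD (p.toList.take (v+1))
  have hlen : (p.toList.take (v+1)).length = v+1 := by
    rw [List.length_take, len n p hp]; omega
  omega

lemma d_last (n : ℕ) (p : DyckWord) (hp : p.semilength = n + 1) :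
    d n p hp (Fin.last n) = 2*n+1 := by
  have h1 := d_lb n p hp (Fin.last n)
  have h2 := d_lt n p hp (Fin.last n)
  simp only [Fin.val_last] at h1
  omega

lemma mem_S_iff (n : ℕ) (p : DyckWord) (hp : p.semilength = n + 1)
    {j : ℕ} (hj : j < 2*n+2) :
    j ∈ S n p ↔ P n (fun i : Fin n => d n p hp i.castSucc) j := by
  constructor
  · intro hmem
    have : j ∈ Set.range (d n p hp) := by
      rw [show d n p hp = ((S n p).orderEmbOfFin (cardS n p hp) : Fin (n+1) ↪o ℕ) from rfl]
      rw [Finset.range_orderEmbOfFin]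
      exact_mod_cast hmem
    obtain ⟨l, hl⟩ := this
    by_cases h : (l : ℕ) < n
    · right
      refine ⟨⟨l, h⟩, ?_⟩
      show d n p hp (⟨(l : ℕ), h⟩ : Fin n).castSucc = j
      rw [show ((⟨(l : ℕ), h⟩ : Fin n).castSucc : Fin (n+1)) = l from Fin.ext rfl]
      exact hl
    · left
      have hlast : l = Fin.last n := Fin.ext (by have := l.isLt; simp only [Fin.val_last]; omega)
      rw [hlast, d_last n p hp] at hl
      omega
  · rintro (rfl | ⟨i, rfl⟩)
    · rw [← d_last n p hp]
      exact d_mem n p hp _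
    · exact d_mem n p hp _

lemma word_eq (n : ℕ) (p : DyckWord) (hp : p.semilength = n + 1) :
    word n (fun i : Fin n => d n p hp i.castSucc) = p.toList := by
  set a : Fin n → ℕ := fun i : Fin n => d n p hp i.castSucc with ha
  apply List.ext_getElem
  · rw [word_length, len n p hp]
  intro j h1 h2
  have hj : j < 2*n+2 := by rw [word_length] at h1; exact h1
  have e1 : (word n a)[j] = (word n a).getD j U := (List.getD_eq_getElem _ _ h1).symm
  have e2 : (p.toList)[j] = p.toList.getD j U := (List.getD_eq_getElem _ _ h2).symm
  rw [e1, e2, word_getD a hj]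
  by_cases hP : P n a j
  · rw [if_pos hP]
    have : j ∈ S n p := (mem_S_iff n p hp hj).mpr hP
    exact ((Finset.mem_filter.mp this).2).symm
  · rw [if_neg hP]
    have hnotS : j ∉ S n p := fun h => hP ((mem_S_iff n p hp hj).mp h)
    rcases (p.toList.getD j U).dichotomy with h | h
    · exact h.symm
    · exact absurd (Finset.mem_filter.mpr ⟨Finset.mem_range.mpr hj, h⟩) hnotS

end Rev

theorem key (n : ℕ) :
    Nat.card {a : Fin n → ℕ //
        StrictMono a ∧ ∀ i : Fin n, 2 * (i : ℕ) + 1 ≤ a i ∧ a i ≤ 2 * n}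
      = catalan (n + 1) := by
  classical
  rw [← DyckWord.card_dyckWord_semilength_eq_catalan (n+1), ← Nat.card_eq_fintype_card]
  refine Nat.card_eq_of_bijective
    (fun x => ⟨dyck x.1 x.2.1 x.2.2, dyck_semilength x.1 x.2.1 x.2.2⟩) ⟨?_, ?_⟩
  · rintro ⟨a1, ha1, hab1⟩ ⟨a2, ha2, hab2⟩ h
    simp only [Subtype.mk.injEq] at h
    have hw : word n a1 = word n a2 := congrArg DyckWord.toList h
    have hPiff : ∀ j, j < 2*n+2 → (P n a1 j ↔ P n a2 j) := by
      intro j hj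
      have h0 := congrArg (fun l => l.getD j U) hw
      have hthis : (word n a1).getD j U = (word n a2).getD j U := h0
      rw [word_getD a1 hj, word_getD a2 hj] at hthis
      rename' hthis => this
      by_cases h1 : P n a1 j <;> by_cases h2 : P n a2 j
      · exact iff_of_true h1 h2
      · rw [if_pos h1, if_neg h2] at this; simp at this
      · rw [if_neg h1, if_pos h2] at this; simp at this
      · exact iff_of_false h1 h2
    have hrange : Set.range a1 = Set.range a2 := by
      ext x
      constructor
      · rintro ⟨i, rfl⟩
        have hb := (hab1 i).2
        have hP1 : P n a1 (a1 i) := Or.inr ⟨i, rfl⟩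
        rcases (hPiff _ (by omega)).mp hP1 with h | ⟨i2, hi2⟩
        · omega
        · exact ⟨i2, hi2⟩
      · rintro ⟨i, rfl⟩
        have hb := (hab2 i).2
        have hP2 : P n a2 (a2 i) := Or.inr ⟨i, rfl⟩
        rcases (hPiff _ (by omega)).mpr hP2 with h | ⟨i2, hi2⟩
        · omega
        · exact ⟨i2, hi2⟩
    haveI : WellFoundedLT (Fin n) := inferInstance
    have : a1 = a2 := (ha1.range_inj ha2).mp hrange
    exact Subtype.ext this
  · rintro ⟨p, hp⟩
    set a : Fin n → ℕ := fun i : Fin n => Rev.d n p hp i.castSucc with ha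
    have hmono : StrictMono a := by
      intro i j hij
      exact (Rev.d n p hp).strictMono (by exact_mod_cast hij)
    have hbound : ∀ i : Fin n, 2 * (i : ℕ) + 1 ≤ a i ∧ a i ≤ 2 * n := by
      intro i
      constructor
      · have := Rev.d_lb n p hp i.castSucc
        simpa using this
      · have hlt : a i < Rev.d n p hp (Fin.last n) :=
          (Rev.d n p hp).strictMono (Fin.castSucc_lt_last i)
        rw [Rev.d_last n p hp] at hlt
        omega
    refine ⟨⟨a, hmono, hbound⟩, ?_⟩
    apply Subtype.ext
    apply DyckWord.ext
    exact Rev.word_eq n p hp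

end AdmissibleCatalan

/-- The number of admissible sequences of length `m-1` (strictly increasing integer
sequences `(a_1, …, a_{m-1})` with `2i-1 ≤ a_i ≤ 2(m-1)` for all `i`) is the
Catalan number `C_m = binomial(2m, m)/(m+1)`. -/
theorem card_admissible_eq_catalan (m : ℕ) (hm : 1 ≤ m) :
    Nat.card {a : Fin (m - 1) → ℕ //
        StrictMono a ∧ ∀ i : Fin (m - 1), 2 * (i : ℕ) + 1 ≤ a i ∧ a i ≤ 2 * (m - 1)}
      = Nat.choose (2 * m) m / (m + 1) := by
  obtain ⟨n, rfl⟩ : ∃ n, m = n + 1 := ⟨m - 1, by omega⟩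
  have h := AdmissibleCatalan.key n
  rw [catalan_eq_centralBinom_div, Nat.centralBinom] at h
  exact h
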